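/- Let η > 0, κ ∈ ℝ^{n×n} with κ_ij > 0, r, c ∈ Δ^n, and let x̃ = (α̃, β̃, Ũ) with Ũ ∈ ℝ^{d×k}, Ũ^TŨ = I_k, such that ‖ζ_η(x̃,κ)‖₁ = 1. Then for every ε_2 ≥ 0 and every π̂ ∈ Π(r,c) with ‖π̂ − π_η(x̃,κ)‖₁ ≤ ε_2, it holds that ⟨π̂, Z(x̃)⟩ ≤ (2 log n + ‖log κ‖_var) η + (‖α̃‖_var + ‖β̃‖_var + ‖C‖_∞) ε_2. -/

import Mathlib

open scoped BigOperators
open Matrix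

noncomputable section

namespace PRWPaper

/-- Squared Euclidean norm of a vector in `ℝ^d`. -/
def sqnorm {d : ℕ} (v : Fin d → ℝ) : ℝ := ∑ l, (v l) ^ 2

/-- `‖Uᵀ w‖²  = ⟨w wᵀ, U Uᵀ⟩` for `U ∈ ℝ^{d×k}`, `w ∈ ℝ^d`. -/
def projSq {d k : ℕ} (U : Matrix (Fin d) (Fin k) ℝ) (w : Fin d → ℝ) : ℝ :=
  ∑ m, (∑ l, U l m * w l) ^ 2

/-- `C_ij = ‖x_i - y_j‖²`. -/
def costC {n d : ℕ} (x y : Fin n → Fin d → ℝ) (i j : Fin n) : ℝ :=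
  sqnorm (fun l => x i l - y j l)

/-- `[C(U)]_ij = ‖Uᵀ (x_i - y_j)‖² = ⟨M_ij, U Uᵀ⟩`. -/
def costCU {n d k : ℕ} (x y : Fin n → Fin d → ℝ) (U : Matrix (Fin d) (Fin k) ℝ)
    (i j : Fin n) : ℝ :=
  projSq U (fun l => x i l - y j l)

/-- `‖C‖_∞ = max_{i,j} |C_ij|`. -/
def CInf {n d : ℕ} (x y : Fin n → Fin d → ℝ) : ℝ :=
  ⨆ p : Fin n × Fin n, |costC x y p.1 p.2|

/-- `φ_ij(α, β, U) = α_i + β_j + ⟨M_ij, U Uᵀ⟩`. -/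
def phi {n d k : ℕ} (x y : Fin n → Fin d → ℝ) (α β : Fin n → ℝ)
    (U : Matrix (Fin d) (Fin k) ℝ) (i j : Fin n) : ℝ :=
  α i + β j + costCU x y U i j

/-- `min_{i,j} φ_ij(α, β, U)`. -/
def phiMin {n d k : ℕ} (x y : Fin n → Fin d → ℝ) (α β : Fin n → ℝ)
    (U : Matrix (Fin d) (Fin k) ℝ) : ℝ :=
  ⨅ p : Fin n × Fin n, phi x y α β U p.1 p.2

/-- Membership in the (relatively open) simplex `Δ^n`. -/
def inSimplex {n : ℕ} (r : Fin n → ℝ) : Prop :=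
  (∑ i, r i) = 1 ∧ ∀ i, 0 < r i

/-- Membership in the transportation polytope `Π(r, c)`. -/
def inPlans {n : ℕ} (r c : Fin n → ℝ) (π : Matrix (Fin n) (Fin n) ℝ) : Prop :=
  (∀ i, ∑ j, π i j = r i) ∧ (∀ j, ∑ i, π i j = c j) ∧ ∀ i j, 0 ≤ π i j

/-- `ℓ₁` norm of a matrix. -/
def l1norm {n : ℕ} (A : Matrix (Fin n) (Fin n) ℝ) : ℝ := ∑ i, ∑ j, |A i j|

/-- `ζ_η(x, κ)_ij = κ_ij exp(-φ_ij(x)/η)`. -/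
def zeta {n d k : ℕ} (η : ℝ) (κ : Matrix (Fin n) (Fin n) ℝ) (x y : Fin n → Fin d → ℝ)
    (α β : Fin n → ℝ) (U : Matrix (Fin d) (Fin k) ℝ) : Matrix (Fin n) (Fin n) ℝ :=
  fun i j => κ i j * Real.exp (-(phi x y α β U i j) / η)

/-- `L_η((α,β,U), κ) = rᵀα + cᵀβ + η log ‖ζ_η((α,β,U),κ)‖₁`. -/
def Lfun {n d k : ℕ} (η : ℝ) (κ : Matrix (Fin n) (Fin n) ℝ) (r c : Fin n → ℝ)
    (x y : Fin n → Fin d → ℝ) (α β : Fin n → ℝ) (U : Matrix (Fin d) (Fin k) ℝ) : ℝ :=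
  (∑ i, r i * α i) + (∑ j, c j * β j) + η * Real.log (l1norm (zeta η κ x y α β U))

/-- `π_η(x, κ) = ζ_η(x,κ)/‖ζ_η(x,κ)‖₁`. -/
def piEta {n d k : ℕ} (η : ℝ) (κ : Matrix (Fin n) (Fin n) ℝ) (x y : Fin n → Fin d → ℝ)
    (α β : Fin n → ℝ) (U : Matrix (Fin d) (Fin k) ℝ) : Matrix (Fin n) (Fin n) ℝ :=
  fun i j => zeta η κ x y α β U i j / l1norm (zeta η κ x y α β U)

/-- Entropy `H(π) = -Σ_ij π_ij log π_ij` (with the convention `0 log 0 = 0`,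
which holds since `Real.log 0 = 0`). -/
def entropy {n : ℕ} (π : Matrix (Fin n) (Fin n) ℝ) : ℝ :=
  -∑ i, ∑ j, π i j * Real.log (π i j)

/-- `h(π, U) = ⟨C(U) - η log κ, π⟩ - η H(π)`. -/
def hObj {n d k : ℕ} (η : ℝ) (κ : Matrix (Fin n) (Fin n) ℝ) (x y : Fin n → Fin d → ℝ)
    (U : Matrix (Fin d) (Fin k) ℝ) (π : Matrix (Fin n) (Fin n) ℝ) : ℝ :=
  (∑ i, ∑ j, (costCU x y U i j - η * Real.log (κ i j)) * π i j) - η * entropy π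

/-- `‖π 1 - r‖₁`, the row-sum feasibility residual. -/
def rowRes {n : ℕ} (r : Fin n → ℝ) (π : Matrix (Fin n) (Fin n) ℝ) : ℝ :=
  ∑ i, |(∑ j, π i j) - r i|

/-- `‖πᵀ 1 - c‖₁`, the column-sum feasibility residual. -/
def colRes {n : ℕ} (c : Fin n → ℝ) (π : Matrix (Fin n) (Fin n) ℝ) : ℝ :=
  ∑ j, |(∑ i, π i j) - c j|

/-- Variation seminorm `‖v‖_var = max_i v_i - min_i v_i` of a vector. -/
def varVec {n : ℕ} (v : Fin n → ℝ) : ℝ := (⨆ i, v i) - (⨅ i, v i)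

/-- `‖log κ‖_var = max_{ij} log κ_ij - min_{ij} log κ_ij`. -/
def varLog {n : ℕ} (κ : Matrix (Fin n) (Fin n) ℝ) : ℝ :=
  (⨆ p : Fin n × Fin n, Real.log (κ p.1 p.2)) - (⨅ p : Fin n × Fin n, Real.log (κ p.1 p.2))

/-- `‖log κ‖_∞ = max_{ij} |log κ_ij|`. -/
def logInf {n : ℕ} (κ : Matrix (Fin n) (Fin n) ℝ) : ℝ :=
  ⨆ p : Fin n × Fin n, |Real.log (κ p.1 p.2)|

/-- Frobenius norm of a matrix. -/
def frobNorm {d k : ℕ} (A : Matrix (Fin d) (Fin k) ℝ) : ℝ :=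
  Real.sqrt (∑ l, ∑ m, (A l m) ^ 2)

/-- `V_π = Σ_ij π_ij M_ij` with `M_ij = (x_i - y_j)(x_i - y_j)ᵀ`. -/
def Vmat {n d : ℕ} (x y : Fin n → Fin d → ℝ) (π : Matrix (Fin n) (Fin n) ℝ) :
    Matrix (Fin d) (Fin d) ℝ :=
  fun l l' => ∑ i, ∑ j, π i j * ((x i l - y j l) * (x i l' - y j l'))

/-- Projection onto the tangent space of the Stiefel manifold at `U`:
`Proj_{T_U S}(A) = A - U (UᵀA + AᵀU)/2`. -/
def projTan {d k : ℕ} (U A : Matrix (Fin d) (Fin k) ℝ) : Matrix (Fin d) (Fin k) ℝ :=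
  A - (1 / 2 : ℝ) • (U * (Uᵀ * A + Aᵀ * U))

/-- Transport plan `(u_i A_ij v_j)_{ij}` normalized to total mass one. -/
def sinkMat {n : ℕ} (A : Matrix (Fin n) (Fin n) ℝ) (u v : Fin n → ℝ) :
    Matrix (Fin n) (Fin n) ℝ :=
  fun i j => u i * A i j * v j / (∑ i', ∑ j', u i' * A i' j' * v j')

lemma le_fin_ciSup {ι : Type*} [Fintype ι] (f : ι → ℝ) (i : ι) : f i ≤ ⨆ j, f j :=
  le_ciSup (Set.Finite.bddAbove (Set.finite_range f)) i

lemma fin_ciInf_le {ι : Type*} [Fintype ι] (f : ι → ℝ) (i : ι) : (⨅ j, f j) ≤ f i :=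
  ciInf_le (Set.Finite.bddBelow (Set.finite_range f)) i

lemma projSq_le_sqnorm {d k : ℕ} (U : Matrix (Fin d) (Fin k) ℝ)
    (hU : Uᵀ * U = 1) (w : Fin d → ℝ) : projSq U w ≤ sqnorm w := by
  classical
  set v : Fin k → ℝ := fun m => ∑ l, U l m * w l with hv
  have horth : ∀ m m' : Fin k, (∑ l, U l m * U l m') = if m = m' then (1:ℝ) else 0 := by
    intro m m'
    have h := congrFun (congrFun hU m) m'
    simpa [Matrix.mul_apply, Matrix.transpose_apply, Matrix.one_apply] using h
  have hPP : (∑ l, (∑ m, U l m * v m) ^ 2) = ∑ m, v m ^ 2 := by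
    calc (∑ l, (∑ m, U l m * v m) ^ 2)
        = ∑ l, ∑ m, ∑ m', (U l m * v m) * (U l m' * v m') := by
          refine Finset.sum_congr rfl fun l _ => ?_
          rw [sq, Finset.sum_mul_sum]
      _ = ∑ m, ∑ m', (v m * v m') * ∑ l, U l m * U l m' := by
          rw [Finset.sum_comm]
          refine Finset.sum_congr rfl fun m _ => ?_
          rw [Finset.sum_comm]
          refine Finset.sum_congr rfl fun m' _ => ?_
          rw [Finset.mul_sum]
          refine Finset.sum_congr rfl fun l _ => by ring
      _ = ∑ m, v m ^ 2 := by
          refine Finset.sum_congr rfl fun m _ => ?_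
          simp [horth, mul_ite, Finset.sum_ite_eq, sq]
  have hinner : (∑ l, w l * (∑ m, U l m * v m)) = ∑ m, v m ^ 2 := by
    calc (∑ l, w l * ∑ m, U l m * v m)
        = ∑ l, ∑ m, w l * (U l m * v m) := by
          refine Finset.sum_congr rfl fun l _ => Finset.mul_sum _ _ _
      _ = ∑ m, ∑ l, w l * (U l m * v m) := Finset.sum_comm
      _ = ∑ m, v m ^ 2 := by
          refine Finset.sum_congr rfl fun m _ => ?_
          rw [sq, hv]
          rw [Finset.sum_mul]
          refine Finset.sum_congr rfl fun l _ => by ring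
  have hnn : (0:ℝ) ≤ ∑ l, (w l - ∑ m, U l m * v m) ^ 2 :=
    Finset.sum_nonneg fun l _ => sq_nonneg _
  have hexp : (∑ l, (w l - ∑ m, U l m * v m) ^ 2)
      = sqnorm w - 2 * (∑ l, w l * ∑ m, U l m * v m)
        + ∑ l, (∑ m, U l m * v m) ^ 2 := by
    rw [sqnorm, Finset.mul_sum, ← Finset.sum_sub_distrib, ← Finset.sum_add_distrib]
    exact Finset.sum_congr rfl fun l _ => by ring
  have hproj : projSq U w = ∑ m, v m ^ 2 := rfl
  rw [hproj, sqnorm]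
  rw [sqnorm] at hexp
  linarith [hnn, hexp, hinner, hPP]

/-- inequality (4.18b) of Theorem 4.8: the complementarity bound
after rounding. -/
theorem statement15 (n d k : ℕ) (hn : 1 ≤ n) (η : ℝ) (hη : 0 < η)
    (κ : Matrix (Fin n) (Fin n) ℝ) (hκ : ∀ i j, 0 < κ i j)
    (r c : Fin n → ℝ) (hr : inSimplex r) (hc : inSimplex c)
    (x y : Fin n → Fin d → ℝ) (αt βt : Fin n → ℝ) (Ut : Matrix (Fin d) (Fin k) ℝ)
    (hU : Utᵀ * Ut = 1)
    (hζ : l1norm (zeta η κ x y αt βt Ut) = 1) :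
    ∀ ε2 : ℝ, 0 ≤ ε2 → ∀ πh : Matrix (Fin n) (Fin n) ℝ, inPlans r c πh →
      l1norm (πh - piEta η κ x y αt βt Ut) ≤ ε2 →
      (∑ i, ∑ j, πh i j * (phi x y αt βt Ut i j - phiMin x y αt βt Ut))
        ≤ (2 * Real.log n + varLog κ) * η
          + (varVec αt + varVec βt + CInf x y) * ε2 := by
  intro ε2 hε2 πh hπh hl1
  haveI : Nonempty (Fin n) := ⟨⟨0, hn⟩⟩
  set φ := phi x y αt βt Ut with hφdef
  set m := phiMin x y αt βt Ut with hmdef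
  set π := zeta η κ x y αt βt Ut with hπdef
  have hπpos : ∀ i j, 0 < π i j := fun i j => mul_pos (hκ i j) (Real.exp_pos _)
  have hπsum : ∑ i, ∑ j, π i j = 1 := by
    rw [← hζ, l1norm]
    exact Finset.sum_congr rfl fun i _ => Finset.sum_congr rfl fun j _ =>
      (abs_of_pos (hπpos i j)).symm
  have hpiEta : piEta η κ x y αt βt Ut = π := by
    funext i j
    show zeta η κ x y αt βt Ut i j / l1norm (zeta η κ x y αt βt Ut) = π i j
    rw [← hπdef, hζ, div_one]
  have hlogπ : ∀ i j, Real.log (π i j) = Real.log (κ i j) - φ i j / η := by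
    intro i j
    have hz : π i j = κ i j * Real.exp (-(φ i j) / η) := rfl
    rw [hz, Real.log_mul (hκ i j).ne' (Real.exp_ne_zero _), Real.log_exp]
    ring
  have hφeq : ∀ i j, φ i j = η * Real.log (κ i j) - η * Real.log (π i j) := by
    intro i j
    rw [hlogπ i j]
    field_simp
    ring
  have hπle1 : ∀ i j, π i j ≤ 1 := by
    intro i j
    rw [← hπsum]
    refine le_trans (Finset.single_le_sum (f := fun j' => π i j')
      (fun j' _ => (hπpos i j').le) (Finset.mem_univ j)) ?_
    exact Finset.single_le_sum (f := fun i' => ∑ j', π i' j')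
      (fun i' _ => Finset.sum_nonneg fun j' _ => (hπpos i' j').le) (Finset.mem_univ i)
  set Lmax := ⨆ p : Fin n × Fin n, Real.log (κ p.1 p.2) with hLmax
  set Lmin := ⨅ p : Fin n × Fin n, Real.log (κ p.1 p.2) with hLmin
  have hvarLog : varLog κ = Lmax - Lmin := rfl
  -- lower bound on m
  have hφ_lb : ∀ i j, η * Real.log (κ i j) ≤ φ i j := by
    intro i j
    have hlogle : Real.log (π i j) ≤ 0 := Real.log_nonpos (hπpos i j).le (hπle1 i j)
    have h0 : η * Real.log (π i j) ≤ 0 := mul_nonpos_of_nonneg_of_nonpos hη.le hlogle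
    rw [hφeq i j]
    linarith
  have hm_lb : η * Lmin ≤ m := by
    rw [hmdef]
    refine le_ciInf fun p => ?_
    have h1 : Lmin ≤ Real.log (κ p.1 p.2) :=
      fin_ciInf_le (fun p : Fin n × Fin n => Real.log (κ p.1 p.2)) p
    have h2 := hφ_lb p.1 p.2
    have h3 : η * Lmin ≤ η * Real.log (κ p.1 p.2) := mul_le_mul_of_nonneg_left h1 hη.le
    calc η * Lmin ≤ φ p.1 p.2 := by linarith
      _ = phi x y αt βt Ut p.1 p.2 := rfl
  -- ∑ π log κ ≤ Lmax
  have hκ_ub : ∀ i j, Real.log (κ i j) ≤ Lmax := fun i j =>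
    le_fin_ciSup (fun p : Fin n × Fin n => Real.log (κ p.1 p.2)) (i, j)
  have h1 : ∑ i, ∑ j, π i j * Real.log (κ i j) ≤ Lmax := by
    calc (∑ i, ∑ j, π i j * Real.log (κ i j))
        ≤ ∑ i, ∑ j, π i j * Lmax :=
          Finset.sum_le_sum fun i _ => Finset.sum_le_sum fun j _ =>
            mul_le_mul_of_nonneg_left (hκ_ub i j) (hπpos i j).le
      _ = Lmax := by
          simp only [← Finset.sum_mul]
          rw [hπsum, one_mul]
  -- entropy bound
  have hn0 : (0:ℝ) < (n:ℝ) := by exact_mod_cast hn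
  set N : ℝ := (n:ℝ) ^ 2 with hN
  have hNpos : (0:ℝ) < N := by positivity
  have h2 : -(∑ i, ∑ j, π i j * Real.log (π i j)) ≤ Real.log N := by
    have key : ∀ i j, -(π i j * Real.log (π i j)) - π i j * Real.log N
        ≤ 1 / N - π i j := by
      intro i j
      have hx : (0:ℝ) < 1 / (N * π i j) :=
        div_pos one_pos (mul_pos hNpos (hπpos i j))
      have hlog := Real.log_le_sub_one_of_pos hx
      rw [one_div, Real.log_inv, Real.log_mul hNpos.ne' (hπpos i j).ne'] at hlog
      have h3 := mul_le_mul_of_nonneg_left hlog (hπpos i j).le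
      have h4 : π i j * ((N * π i j)⁻¹ - 1) = 1 / N - π i j := by
        field_simp [(hπpos i j).ne', hNpos.ne']
      rw [h4] at h3
      nlinarith [h3]
    have hsumkey : (∑ i, ∑ j, (-(π i j * Real.log (π i j)) - π i j * Real.log N))
        ≤ ∑ i, ∑ j, (1 / N - π i j) :=
      Finset.sum_le_sum fun i _ => Finset.sum_le_sum fun j _ => key i j
    have hrhs : (∑ i, ∑ j, (1 / N - π i j : ℝ)) = 0 := by
      simp only [Finset.sum_sub_distrib]
      rw [hπsum]
      simp only [Finset.sum_const, Finset.card_univ, Fintype.card_fin, nsmul_eq_mul]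
      rw [hN]
      field_simp
      ring
    have hlhs : (∑ i, ∑ j, (-(π i j * Real.log (π i j)) - π i j * Real.log N))
        = -(∑ i, ∑ j, π i j * Real.log (π i j)) - (∑ i, ∑ j, π i j) * Real.log N := by
      simp only [Finset.sum_sub_distrib, Finset.sum_neg_distrib, ← Finset.sum_mul]
    rw [hlhs, hπsum, one_mul, hrhs] at hsumkey
    linarith
  have hlogN : Real.log N = 2 * Real.log n := by
    rw [hN, Real.log_pow]
    norm_num
  -- ⟨π, Z⟩ bound
  have hπZ : ∑ i, ∑ j, π i j * (φ i j - m) ≤ (2 * Real.log n + (Lmax - Lmin)) * η := by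
    have e : ∑ i, ∑ j, π i j * (φ i j - m) = (∑ i, ∑ j, π i j * φ i j) - m := by
      simp only [mul_sub, Finset.sum_sub_distrib, ← Finset.sum_mul]
      rw [hπsum, one_mul]
    have e2 : ∑ i, ∑ j, π i j * φ i j
        = η * (∑ i, ∑ j, π i j * Real.log (κ i j))
          - η * (∑ i, ∑ j, π i j * Real.log (π i j)) := by
      rw [Finset.mul_sum, Finset.mul_sum, ← Finset.sum_sub_distrib]
      refine Finset.sum_congr rfl fun i _ => ?_
      rw [Finset.mul_sum, Finset.mul_sum, ← Finset.sum_sub_distrib]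
      refine Finset.sum_congr rfl fun j _ => ?_
      rw [hφeq i j]
      ring
    rw [e, e2]
    have hκmul : η * (∑ i, ∑ j, π i j * Real.log (κ i j)) ≤ η * Lmax :=
      mul_le_mul_of_nonneg_left h1 hη.le
    have hHmul : η * (-(∑ i, ∑ j, π i j * Real.log (π i j))) ≤ η * Real.log N :=
      mul_le_mul_of_nonneg_left h2 hη.le
    rw [hlogN] at hHmul
    nlinarith [hm_lb]
  -- Z entry bounds
  have hZ_nonneg : ∀ i j, 0 ≤ φ i j - m := by
    intro i j
    have h := fin_ciInf_le (fun p : Fin n × Fin n => phi x y αt βt Ut p.1 p.2) (i, j)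
    have hm : m ≤ φ i j := h
    linarith
  have hcost_nonneg : ∀ i j, 0 ≤ costCU x y Ut i j := by
    intro i j
    show (0:ℝ) ≤ ∑ m', (∑ l, Ut l m' * (x i l - y j l)) ^ 2
    exact Finset.sum_nonneg fun _ _ => sq_nonneg _
  have hcost_le : ∀ i j, costCU x y Ut i j ≤ CInf x y := by
    intro i j
    have ha : costCU x y Ut i j ≤ costC x y i j := projSq_le_sqnorm Ut hU _
    have hb : costC x y i j ≤ |costC x y i j| := le_abs_self _
    have hc' : |costC x y i j| ≤ CInf x y :=
      le_fin_ciSup (fun p : Fin n × Fin n => |costC x y p.1 p.2|) (i, j)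
    linarith
  have hCInf_nonneg : 0 ≤ CInf x y := by
    refine le_trans (abs_nonneg (costC x y ⟨0, hn⟩ ⟨0, hn⟩)) ?_
    exact le_fin_ciSup (fun p : Fin n × Fin n => |costC x y p.1 p.2|) (⟨0, hn⟩, ⟨0, hn⟩)
  have hm_lb2 : (⨅ i, αt i) + (⨅ j, βt j) ≤ m := by
    rw [hmdef]
    refine le_ciInf fun p => ?_
    have ha := fin_ciInf_le αt p.1
    have hb := fin_ciInf_le βt p.2
    have hc' := hcost_nonneg p.1 p.2
    show _ ≤ αt p.1 + βt p.2 + costCU x y Ut p.1 p.2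
    linarith
  have hZ_ub : ∀ i j, φ i j - m ≤ varVec αt + varVec βt + CInf x y := by
    intro i j
    have hup : φ i j ≤ (⨆ i', αt i') + (⨆ j', βt j') + CInf x y := by
      have ha := le_fin_ciSup αt i
      have hb := le_fin_ciSup βt j
      have hc' := hcost_le i j
      have he : φ i j = αt i + βt j + costCU x y Ut i j := rfl
      linarith [he.le, he.ge]
    have hv : varVec αt + varVec βt
        = ((⨆ i', αt i') - ⨅ i', αt i') + ((⨆ j', βt j') - ⨅ j', βt j') := rfl
    linarith [hm_lb2]
  have hB_nonneg : 0 ≤ varVec αt + varVec βt + CInf x y := by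
    have ha : (⨅ i, αt i) ≤ ⨆ i, αt i :=
      (fin_ciInf_le αt ⟨0, hn⟩).trans (le_fin_ciSup αt ⟨0, hn⟩)
    have hb : (⨅ i, βt i) ≤ ⨆ i, βt i :=
      (fin_ciInf_le βt ⟨0, hn⟩).trans (le_fin_ciSup βt ⟨0, hn⟩)
    have hv : varVec αt + varVec βt
        = ((⨆ i', αt i') - ⨅ i', αt i') + ((⨆ j', βt j') - ⨅ j', βt j') := rfl
    linarith
  -- the ℓ1 bound
  have hl1' : (∑ i, ∑ j, |πh i j - π i j|) ≤ ε2 := by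
    have : l1norm (πh - piEta η κ x y αt βt Ut) = ∑ i, ∑ j, |πh i j - π i j| := by
      rw [hpiEta, l1norm]
      exact Finset.sum_congr rfl fun i _ => Finset.sum_congr rfl fun j _ => by
        rw [Matrix.sub_apply]
    linarith [hl1, this.le, this.ge]
  have hbound2 : ∑ i, ∑ j, (πh i j - π i j) * (φ i j - m)
      ≤ (varVec αt + varVec βt + CInf x y) * ε2 := by
    calc (∑ i, ∑ j, (πh i j - π i j) * (φ i j - m))
        ≤ ∑ i, ∑ j, |πh i j - π i j| * (varVec αt + varVec βt + CInf x y) := by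
          refine Finset.sum_le_sum fun i _ => Finset.sum_le_sum fun j _ => ?_
          calc (πh i j - π i j) * (φ i j - m)
              ≤ |πh i j - π i j| * (φ i j - m) :=
                mul_le_mul_of_nonneg_right (le_abs_self _) (hZ_nonneg i j)
            _ ≤ |πh i j - π i j| * (varVec αt + varVec βt + CInf x y) :=
                mul_le_mul_of_nonneg_left (hZ_ub i j) (abs_nonneg _)
      _ = (∑ i, ∑ j, |πh i j - π i j|) * (varVec αt + varVec βt + CInf x y) := by
          simp only [← Finset.sum_mul]
      _ ≤ ε2 * (varVec αt + varVec βt + CInf x y) :=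
          mul_le_mul_of_nonneg_right hl1' hB_nonneg
      _ = (varVec αt + varVec βt + CInf x y) * ε2 := mul_comm _ _
  have hsplit : ∑ i, ∑ j, πh i j * (φ i j - m)
      = (∑ i, ∑ j, π i j * (φ i j - m)) + ∑ i, ∑ j, (πh i j - π i j) * (φ i j - m) := by
    simp only [← Finset.sum_add_distrib]
    refine Finset.sum_congr rfl fun i _ => Finset.sum_congr rfl fun j _ => by ring
  rw [hvarLog, hsplit]
  linarith [hπZ, hbound2]

end PRWPaper
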